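/- Fix n ≥ 1 and an open set U ⊆ ℂⁿ × ℂⁿ. If the formal WKB symbols p and q on U both satisfy the microdifferential estimates, then the Leibniz product p★q also satisfies the microdifferential estimates. -/

import Mathlib

set_option maxHeartbeats 1000000
set_option synthInstance.maxHeartbeats 400000


open scoped BigOperators

/-- The phase space `ℂⁿ × ℂⁿ` with coordinates `(x, u)`. -/
abbrev Phase (n : ℕ) := (Fin n → ℂ) × (Fin n → ℂ)

/-- The partial derivative `∂_{x_i}` of a function on `ℂⁿ × ℂⁿ`. -/
noncomputable def pdx {n : ℕ} (i : Fin n) (h : Phase n → ℂ) : Phase n → ℂ :=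
  fun z => fderiv ℂ h z (Pi.single i 1, 0)

/-- The partial derivative `∂_{u_i}` of a function on `ℂⁿ × ℂⁿ`. -/
noncomputable def pdu {n : ℕ} (i : Fin n) (h : Phase n → ℂ) : Phase n → ℂ :=
  fun z => fderiv ℂ h z (0, Pi.single i 1)

/-- The iterated partial derivative `∂_x^α`. -/
noncomputable def dX {n : ℕ} (α : Fin n → ℕ) (h : Phase n → ℂ) : Phase n → ℂ :=
  ((List.finRange n).foldr (fun i F => (pdx i)^[α i] ∘ F) id) h

/-- The iterated partial derivative `∂_u^α`. -/
noncomputable def dU {n : ℕ} (α : Fin n → ℕ) (h : Phase n → ℂ) : Phase n → ℂ :=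
  ((List.finRange n).foldr (fun i F => (pdu i)^[α i] ∘ F) id) h

/-- The Leibniz product of two (coefficient families of) formal WKB symbols:
`(p★q)_j = Σ_{α ∈ ℕⁿ, k+l−|α|=j} (1/α!) · ∂_u^α p_k · ∂_x^α q_l`,
written as a `finsum` over the pairs `(α, k)` (with `l = j + |α| − k`);
for symbols vanishing in large degrees this sum has finite support. -/
noncomputable def leibniz {n : ℕ} (p q : ℤ → Phase n → ℂ) : ℤ → Phase n → ℂ :=
  fun j z => ∑ᶠ ak : (Fin n → ℕ) × ℤ,
    ((∏ i, (ak.1 i).factorial : ℕ) : ℂ)⁻¹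
      * dU ak.1 (p ak.2) z
      * dX ak.1 (q (j + ((∑ i, ak.1 i : ℕ) : ℤ) - ak.2)) z

/-- The unit symbol `1`. -/
def oneSymbol (n : ℕ) : ℤ → Phase n → ℂ := fun j _ => if j = 0 then 1 else 0


/-- A formal WKB symbol satisfies the microdifferential estimates (7.4) if for every
compact `K ⊆ U` there is `C_K > 0` with `sup_K |p_j| ≤ C_K^{−j}·(−j)!` for all `j < 0`. -/
def MicroEstimates {n : ℕ} (U : Set (Phase n)) (p : ℤ → Phase n → ℂ) : Prop :=
  ∀ K : Set (Phase n), K ⊆ U → IsCompact K →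
    ∃ C : ℝ, 0 < C ∧ ∀ j : ℤ, j < 0 → ∀ z ∈ K,
      ‖p j z‖ ≤ C ^ (-j).toNat * ((-j).toNat).factorial


open Metric Set
open scoped Nat

namespace WKB

lemma choose_le_two_pow' (N k : ℕ) : N.choose k ≤ 2 ^ N := by
  rcases le_or_gt k N with h | h
  · calc N.choose k ≤ ∑ m ∈ Finset.range (N + 1), N.choose m :=
        Finset.single_le_sum (fun i _ => Nat.zero_le _) (by simp [Nat.lt_succ_of_le h])
      _ = 2 ^ N := Nat.sum_range_choose N
  · rw [Nat.choose_eq_zero_of_lt h]; positivity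

lemma fact_mul_fact_le (x y : ℕ) : x ! * y ! ≤ (x + y)! :=
  Nat.le_of_dvd (Nat.factorial_pos _) (Nat.factorial_mul_factorial_dvd_factorial_add x y)

lemma fact_add_le (x y : ℕ) : (x + y)! ≤ 2 ^ (x + y) * (x ! * y !) := by
  have h := Nat.add_choose_mul_factorial_mul_factorial x y
  calc (x + y)! = (x + y).choose y * x ! * y ! := h.symm
    _ ≤ 2 ^ (x + y) * x ! * y ! := by
        have := choose_le_two_pow' (x + y) y
        exact Nat.mul_le_mul_right _ (Nat.mul_le_mul_right _ this)
    _ = 2 ^ (x + y) * (x ! * y !) := by ring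

lemma multinom_le {n : ℕ} (α : Fin n → ℕ) (s : Finset (Fin n)) :
    (∑ i ∈ s, α i)! ≤ 2 ^ (s.card * ∑ i ∈ s, α i) * ∏ i ∈ s, (α i)! := by
  induction s using Finset.induction with
  | empty => simp
  | @insert i s hnotmem ih =>
    rw [Finset.sum_insert hnotmem, Finset.prod_insert hnotmem,
      Finset.card_insert_of_notMem hnotmem]
    set t := ∑ j ∈ s, α j with ht
    calc (α i + t)! ≤ 2 ^ (α i + t) * ((α i)! * t !) := fact_add_le _ _
      _ ≤ 2 ^ (α i + t) * ((α i)! * (2 ^ (s.card * t) * ∏ j ∈ s, (α j)!)) := by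
          have := ih
          gcongr
      _ = 2 ^ ((α i + t) + s.card * t) * ((α i)! * ∏ j ∈ s, (α j)!) := by
          rw [pow_add]; ring
      _ ≤ 2 ^ ((s.card + 1) * (α i + t)) * ((α i)! * ∏ j ∈ s, (α j)!) := by
          have hexp : (α i + t) + s.card * t ≤ (s.card + 1) * (α i + t) := by
            calc (α i + t) + s.card * t ≤ (α i + t) + s.card * (α i + t) :=
                Nat.add_le_add_left (Nat.mul_le_mul_left _ (Nat.le_add_left t (α i))) _
              _ = (s.card + 1) * (α i + t) := by ring
          exact Nat.mul_le_mul_right _ (Nat.pow_le_pow_right (by norm_num) hexp)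

lemma madd_le (m c : ℕ) (hc : 1 ≤ c) : m + c ≤ c * 2 ^ m := by
  induction m with
  | zero => simpa using hc.le
  | succ m ih =>
    have h1 : 1 ≤ c * 2 ^ m := Nat.mul_pos hc (Nat.two_pow_pos m)
    calc m + 1 + c ≤ c * 2 ^ m + 1 := by omega
      _ ≤ c * 2 ^ m + c * 2 ^ m := by omega
      _ = c * 2 ^ (m + 1) := by ring

lemma pow_self_le_factorial_mul_exp (a : ℕ) :
    ((max 1 a : ℕ) : ℝ) ^ a ≤ (a ! : ℝ) * Real.exp 1 ^ a := by
  rcases Nat.eq_zero_or_pos a with rfl | ha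
  · simp
  · rw [max_eq_right ha]
    have hx : (0:ℝ) ≤ (a : ℝ) := Nat.cast_nonneg a
    have h1 : (a:ℝ) ^ a / (a ! : ℝ) ≤ Real.exp a := by
      calc (a:ℝ) ^ a / (a ! : ℝ) ≤ ∑ i ∈ Finset.range (a + 1), (a:ℝ) ^ i / i ! :=
          Finset.single_le_sum (f := fun i => (a:ℝ) ^ i / (i ! : ℝ))
            (fun i _ => by positivity) (by simp)
        _ ≤ Real.exp a := Real.sum_le_exp_of_nonneg hx _
    have h2 : Real.exp (a : ℝ) = Real.exp 1 ^ a := by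
      rw [← Real.exp_nat_mul]; norm_num
    have hfa : (0:ℝ) < (a ! : ℝ) := by exact_mod_cast Nat.factorial_pos a
    rw [div_le_iff₀ hfa] at h1
    calc (a:ℝ) ^ a ≤ Real.exp a * a ! := h1
      _ = (a ! : ℝ) * Real.exp 1 ^ a := by rw [h2]; ring


variable {n : ℕ}

/-- directional derivative operator -/
noncomputable def pdv (v : Phase n) (h : Phase n → ℂ) : Phase n → ℂ :=
  fun z => fderiv ℂ h z v

lemma norm_single_le (i : Fin n) : ‖(Pi.single i 1 : Fin n → ℂ)‖ ≤ 1 := by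
  refine (pi_norm_le_iff_of_nonneg zero_le_one).2 fun j => ?_
  rcases eq_or_ne j i with rfl | h
  · simp
  · simp [Pi.single_apply, h]

lemma norm_xdir (i : Fin n) : ‖((Pi.single i 1 : Fin n → ℂ), (0 : Fin n → ℂ))‖ ≤ 1 := by
  rw [Prod.norm_def]
  simp only [norm_zero]
  exact max_le (norm_single_le i) zero_le_one

lemma norm_udir (i : Fin n) : ‖((0 : Fin n → ℂ), (Pi.single i 1 : Fin n → ℂ))‖ ≤ 1 := by
  rw [Prod.norm_def]
  simp only [norm_zero]
  exact max_le zero_le_one (norm_single_le i)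

lemma hasDerivAt_slice {f : Phase n → ℂ} {z v : Phase n} {t : ℂ}
    (hf : DifferentiableAt ℂ f (z + t • v)) :
    HasDerivAt (fun s : ℂ => f (z + s • v)) (fderiv ℂ f (z + t • v) v) t := by
  have h1 : HasDerivAt (fun s : ℂ => z + s • v) v t := by
    simpa using ((hasDerivAt_id t).smul_const v).const_add z
  exact hf.hasFDerivAt.comp_hasDerivAt t h1

lemma mem_cball_slice {z : Phase n} {v : Phase n} (hv : ‖v‖ ≤ 1) {δ : ℝ} {s : ℂ}
    (hs : ‖s‖ ≤ δ) : z + s • v ∈ closedBall z δ := by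
  simp only [mem_closedBall, dist_eq_norm]
  have : ‖z + s • v - z‖ = ‖s • v‖ := by congr 1; abel
  rw [this, norm_smul]
  calc ‖s‖ * ‖v‖ ≤ ‖s‖ * 1 := mul_le_mul_of_nonneg_left hv (norm_nonneg s)
    _ ≤ δ := by simpa using hs

/-- Single-step Cauchy estimate for a directional derivative. -/
lemma cauchy_dir {f : Phase n → ℂ} {v : Phase n} (hv : ‖v‖ ≤ 1) {z : Phase n} {δ A : ℝ}
    (hδ : 0 < δ) (hdiff : ∀ w ∈ closedBall z δ, DifferentiableAt ℂ f w)
    (hA : ∀ w ∈ closedBall z δ, ‖f w‖ ≤ A) :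
    ‖fderiv ℂ f z v‖ ≤ A / δ := by
  set g : ℂ → ℂ := fun s => f (z + s • v) with hg
  have hgdiff : ∀ s ∈ closedBall (0:ℂ) δ, DifferentiableAt ℂ g s := by
    intro s hs
    exact (hasDerivAt_slice (hdiff _ (mem_cball_slice hv (mem_closedBall_zero_iff.1 hs)))).differentiableAt
  have hgd : DiffContOnCl ℂ g (ball 0 δ) := by
    constructor
    · exact fun s hs => (hgdiff s (ball_subset_closedBall hs)).differentiableWithinAt
    · rw [closure_ball (0:ℂ) hδ.ne']
      exact fun s hs => (hgdiff s hs).continuousAt.continuousWithinAt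
  have hsph : ∀ s ∈ sphere (0:ℂ) δ, ‖g s‖ ≤ A := fun s hs =>
    hA _ (mem_cball_slice hv (le_of_eq (mem_sphere_zero_iff_norm.1 hs)))
  have hder : deriv g 0 = fderiv ℂ f z v := by
    have h0 : DifferentiableAt ℂ f (z + (0:ℂ) • v) := by
      simpa using hdiff z (mem_closedBall_self hδ.le)
    have := (hasDerivAt_slice (t := 0) h0).deriv
    simpa using this
  rw [← hder]
  exact Complex.norm_deriv_le_of_forall_mem_sphere_norm_le hδ hgd hsph


/-- operator norm bound from directional bounds -/
lemma opnorm_le_sum_dirs (L : Phase n →L[ℂ] ℂ) {C : ℝ} (hC : 0 ≤ C)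
    (hx : ∀ i, ‖L (Pi.single i 1, 0)‖ ≤ C) (hu : ∀ i, ‖L (0, Pi.single i 1)‖ ≤ C) :
    ‖L‖ ≤ 2 * n * C := by
  refine L.opNorm_le_bound (by positivity) fun w => ?_
  obtain ⟨wx, wu⟩ := w
  have hdecomp : (wx, wu) = (∑ i, (wx i) • ((Pi.single i 1 : Fin n → ℂ), (0 : Fin n → ℂ)))
      + (∑ i, (wu i) • ((0 : Fin n → ℂ), (Pi.single i 1 : Fin n → ℂ))) := by
    ext j
    · simp [Prod.fst_sum, Finset.sum_apply, Pi.single_apply, mul_ite]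
    · simp [Prod.snd_sum, Finset.sum_apply, Pi.single_apply, mul_ite]
  rw [show L (wx, wu) = L ((∑ i, (wx i) • ((Pi.single i 1 : Fin n → ℂ), (0 : Fin n → ℂ))))
      + L (∑ i, (wu i) • ((0 : Fin n → ℂ), (Pi.single i 1 : Fin n → ℂ))) by
    rw [← map_add, ← hdecomp]]
  rw [map_sum, map_sum]
  have hwx : ∀ i, ‖wx i‖ ≤ ‖(wx, wu)‖ := fun i =>
    (norm_le_pi_norm wx i).trans (norm_fst_le (wx, wu))
  have hwu : ∀ i, ‖wu i‖ ≤ ‖(wx, wu)‖ := fun i =>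
    (norm_le_pi_norm wu i).trans (norm_snd_le (wx, wu))
  calc ‖(∑ i, L ((wx i) • ((Pi.single i 1 : Fin n → ℂ), (0 : Fin n → ℂ))))
        + (∑ i, L ((wu i) • ((0 : Fin n → ℂ), (Pi.single i 1 : Fin n → ℂ))))‖
      ≤ ‖(∑ i, L ((wx i) • ((Pi.single i 1 : Fin n → ℂ), (0 : Fin n → ℂ))))‖
        + ‖(∑ i, L ((wu i) • ((0 : Fin n → ℂ), (Pi.single i 1 : Fin n → ℂ))))‖ := norm_add_le _ _
    _ ≤ (∑ i : Fin n, ‖(wx, wu)‖ * C) + (∑ i : Fin n, ‖(wx, wu)‖ * C) := by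
        gcongr
        · refine (norm_sum_le _ _).trans (Finset.sum_le_sum fun i _ => ?_)
          rw [map_smul, norm_smul]
          exact mul_le_mul (hwx i) (hx i) (norm_nonneg _) (norm_nonneg _)
        · refine (norm_sum_le _ _).trans (Finset.sum_le_sum fun i _ => ?_)
          rw [map_smul, norm_smul]
          exact mul_le_mul (hwu i) (hu i) (norm_nonneg _) (norm_nonneg _)
    _ = 2 * n * C * ‖(wx, wu)‖ := by
        simp [Finset.sum_const, Finset.card_univ]
        ring


/-- The directional derivative of a holomorphic function is holomorphic. -/
lemma pdv_differentiableOn {U : Set (Phase n)} (hU : IsOpen U) {f : Phase n → ℂ}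
    (hf : DifferentiableOn ℂ f U) (v : Phase n) (hv : ‖v‖ ≤ 1) :
    DifferentiableOn ℂ (pdv v f) U := by
  intro z₀ hz₀
  obtain ⟨R, hR, hRU⟩ : ∃ R > 0, closedBall z₀ R ⊆ U := by
    rcases Metric.nhds_basis_closedBall.mem_iff.1 (hU.mem_nhds hz₀) with ⟨R, hR, h⟩
    exact ⟨R, hR, h⟩
  set ρ : ℝ := R / 3 with hρdef
  have hρ : 0 < ρ := by positivity
  obtain ⟨M₀, hM₀⟩ := (isCompact_closedBall z₀ R).exists_bound_of_continuousOn
      (hf.continuousOn.mono hRU)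
  set M : ℝ := max M₀ 0 with hMdef
  have hM : ∀ w ∈ closedBall z₀ R, ‖f w‖ ≤ M := fun w hw => (hM₀ w hw).trans (le_max_left _ _)
  have hM0 : 0 ≤ M := le_max_right _ _
  have h2ρR : 2 * ρ + ρ ≤ R := by rw [hρdef]; ring_nf; rfl
  have h2U : closedBall z₀ (2 * ρ) ⊆ U := fun w hw => hRU (closedBall_subset_closedBall
      (by linarith [hρ.le]) hw)
  have hdiff2 : ∀ w ∈ closedBall z₀ (2 * ρ), DifferentiableAt ℂ f w := fun w hw =>
    hf.differentiableAt (hU.mem_nhds (h2U hw))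
  -- derivative bound on the middle ball
  have hfd : ∀ w ∈ closedBall z₀ (2 * ρ), ‖fderiv ℂ f w‖ ≤ 2 * n * (M / ρ) := by
    intro w hw
    have hball : closedBall w ρ ⊆ closedBall z₀ R := by
      apply closedBall_subset_closedBall'
      rw [mem_closedBall] at hw; linarith
    refine opnorm_le_sum_dirs _ (by positivity) (fun i => ?_) (fun i => ?_)
    · exact cauchy_dir (norm_xdir i) hρ
        (fun y hy => hf.differentiableAt (hU.mem_nhds (hRU (hball hy))))
        (fun y hy => hM y (hball hy))
    · exact cauchy_dir (norm_udir i) hρ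
        (fun y hy => hf.differentiableAt (hU.mem_nhds (hRU (hball hy))))
        (fun y hy => hM y (hball hy))
  -- the integrand
  set c : ℝ → ℂ := fun θ =>
    (2 * (Real.pi : ℂ) * Complex.I)⁻¹ * (deriv (circleMap 0 ρ) θ * (circleMap 0 ρ θ) ^ (-2 : ℤ))
    with hcdef
  set F : Phase n → ℝ → ℂ := fun x θ => c θ * f (x + circleMap 0 ρ θ • v) with hFdef
  set F' : Phase n → ℝ → Phase n →L[ℂ] ℂ := fun x θ =>
    c θ • fderiv ℂ f (x + circleMap 0 ρ θ • v) with hF'def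
  have hmempt : ∀ x ∈ ball z₀ ρ, ∀ θ : ℝ, x + circleMap 0 ρ θ • v ∈ closedBall z₀ (2 * ρ) := by
    intro x hx θ
    have h1 : x + circleMap 0 ρ θ • v ∈ closedBall x ρ :=
      mem_cball_slice hv (le_of_eq (by rw [norm_circleMap_zero, abs_of_pos hρ]))
    rw [mem_closedBall] at h1 ⊢
    rw [mem_ball] at hx
    calc dist (x + circleMap 0 ρ θ • v) z₀ ≤ dist (x + circleMap 0 ρ θ • v) x + dist x z₀ :=
          dist_triangle _ _ _
      _ ≤ ρ + ρ := by gcongr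
      _ = 2 * ρ := by ring
  have hccont : Continuous c := by
    simp only [hcdef, deriv_circleMap]
    refine continuous_const.mul (Continuous.mul ((continuous_circleMap 0 ρ).mul continuous_const) ?_)
    refine Continuous.zpow₀ (continuous_circleMap 0 ρ) _ fun θ => Or.inl ?_
    exact circleMap_ne_center hρ.ne'
  have hFcont : ∀ x ∈ ball z₀ ρ, Continuous (F x) := by
    intro x hx
    refine hccont.mul (ContinuousOn.comp_continuous (hf.continuousOn)
      (continuous_const.add ((continuous_circleMap 0 ρ).smul continuous_const)) ?_)
    exact fun θ => h2U (hmempt x hx θ)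
  -- representation on the ball
  have hrep : ∀ z ∈ ball z₀ ρ, pdv v f z = ∫ θ in (0:ℝ)..(2 * Real.pi), F z θ := by
    intro z hz
    have hgdiff : ∀ s : ℂ, ‖s‖ ≤ ρ → DifferentiableAt ℂ (fun s : ℂ => f (z + s • v)) s := by
      intro s hs
      have : z + s • v ∈ closedBall z₀ (2 * ρ) := by
        have h1 := mem_cball_slice (z := z) hv hs
        rw [mem_closedBall] at h1 ⊢
        rw [mem_ball] at hz
        calc dist (z + s • v) z₀ ≤ dist (z + s • v) z + dist z z₀ := dist_triangle _ _ _
          _ ≤ ρ + ρ := by gcongr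
          _ = 2 * ρ := by ring
      exact (hasDerivAt_slice (hdiff2 _ this)).differentiableAt
    have hgc : DiffContOnCl ℂ (fun s : ℂ => f (z + s • v)) (ball 0 ρ) := by
      constructor
      · exact fun s hs => (hgdiff s (le_of_lt (by simpa using mem_ball_zero_iff.1 hs))).differentiableWithinAt
      · rw [closure_ball (0:ℂ) hρ.ne']
        exact fun s hs => (hgdiff s (by simpa using mem_closedBall_zero_iff.1 hs)).continuousAt.continuousWithinAt
    have h1 : deriv (fun s : ℂ => f (z + s • v)) 0 = (2 * (Real.pi : ℂ) * Complex.I)⁻¹ •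
        circleIntegral (fun s => (s - 0) ^ (-2 : ℤ) • f (z + s • v)) 0 ρ := by
      have h := hgc.deriv_eq_smul_circleIntegral hρ
      rw [eq_inv_smul_iff₀ (by simp [Real.pi_ne_zero]), ← h]
      congr 1; funext s; rw [zpow_neg, zpow_ofNat, one_div]
    have h2 : deriv (fun s : ℂ => f (z + s • v)) 0 = pdv v f z := by
      have h0 : DifferentiableAt ℂ f (z + (0:ℂ) • v) := by
        apply hdiff2
        simp only [zero_smul, add_zero]
        exact closedBall_subset_closedBall (by linarith) (ball_subset_closedBall hz)
      have := (hasDerivAt_slice (t := 0) h0).deriv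
      simpa [pdv] using this
    rw [h2] at h1
    rw [h1, circleIntegral, ← intervalIntegral.integral_smul]
    refine intervalIntegral.integral_congr fun θ _ => ?_
    simp only [hFdef, hcdef, sub_zero, smul_eq_mul]
    ring
  -- differentiation under the integral sign
  have hbound_int : IntervalIntegrable (fun _ : ℝ => (2 * Real.pi)⁻¹ * (ρ * ρ ^ (-2:ℤ)) * (2 * n * (M / ρ)))
      MeasureTheory.volume 0 (2 * Real.pi) := intervalIntegrable_const
  have hcnorm : ∀ θ : ℝ, ‖c θ‖ = (2 * Real.pi)⁻¹ * (ρ * ρ ^ (-2:ℤ)) := by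
    intro θ
    have h2pi : (2 * (Real.pi:ℂ) * Complex.I) = ((2 * Real.pi : ℝ) : ℂ) * Complex.I := by
      push_cast; ring
    have hcm : ‖circleMap 0 ρ θ‖ = ρ := by
      rw [norm_circleMap_zero, abs_of_pos hρ]
    simp only [hcdef, h2pi, deriv_circleMap, norm_mul, norm_inv, norm_zpow, Complex.norm_real,
      Complex.norm_I, mul_one, hcm, Real.norm_eq_abs]
    rw [abs_two, abs_of_pos Real.pi_pos]
  have hFd : HasFDerivAt (fun x => ∫ θ in (0:ℝ)..(2 * Real.pi), F x θ)
      (∫ θ in (0:ℝ)..(2 * Real.pi), F' z₀ θ) z₀ := by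
    apply intervalIntegral.hasFDerivAt_integral_of_dominated_of_fderiv_le (s := ball z₀ ρ)
      (bound := fun _ : ℝ => (2 * Real.pi)⁻¹ * (ρ * ρ ^ (-2:ℤ)) * (2 * n * (M / ρ))) (ball_mem_nhds z₀ hρ)
    · filter_upwards [ball_mem_nhds z₀ hρ] with x hx
      exact (hFcont x hx).aestronglyMeasurable
    · exact (hFcont z₀ (mem_ball_self hρ)).intervalIntegrable _ _
    · -- AEStronglyMeasurable (F' z₀)
      apply MeasureTheory.AEStronglyMeasurable.smul (hccont.aestronglyMeasurable)
      apply Measurable.aestronglyMeasurable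
      exact (measurable_fderiv ℂ f).comp
        (continuous_const.add ((continuous_circleMap 0 ρ).smul continuous_const)).measurable
    · -- bound
      refine MeasureTheory.ae_of_all _ fun θ _ x hx => ?_
      have hns := norm_smul (c θ) (fderiv ℂ f (x + circleMap 0 ρ θ • v))
      rw [hns, hcnorm θ]
      exact mul_le_mul_of_nonneg_left (hfd _ (hmempt x hx θ)) (by positivity)
    · exact hbound_int
    · -- differentiability
      refine MeasureTheory.ae_of_all _ fun θ _ x hx => ?_
      have hpt := hmempt x hx θ
      have h1 : HasFDerivAt (fun y : Phase n => f (y + circleMap 0 ρ θ • v))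
          (fderiv ℂ f (x + circleMap 0 ρ θ • v)) x := by
        have h := (hdiff2 _ hpt).hasFDerivAt.comp x ((hasFDerivAt_id x).add_const (circleMap 0 ρ θ • v))
        simpa [Function.comp_def] using h
      simpa only [hFdef, hF'def] using h1.const_mul (c θ)
  have heq : pdv v f =ᶠ[nhds z₀] fun x => ∫ θ in (0:ℝ)..(2 * Real.pi), F x θ :=
    Filter.eventuallyEq_of_mem (ball_mem_nhds z₀ hρ) hrep
  exact (hFd.differentiableAt.congr_of_eventuallyEq heq).differentiableWithinAt


lemma pdv_iterate_differentiableOn {U : Set (Phase n)} (hU : IsOpen U) {v : Phase n}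
    (hv : ‖v‖ ≤ 1) (m : ℕ) {g : Phase n → ℂ} (hg : DifferentiableOn ℂ g U) :
    DifferentiableOn ℂ ((pdv v)^[m] g) U := by
  induction m with
  | zero => simpa using hg
  | succ m ih => rw [Function.iterate_succ_apply']; exact pdv_differentiableOn hU ih v hv

lemma cthick_step {K : Set (Phase n)} {s δ : ℝ} (hs : 0 ≤ s) (hδ : 0 ≤ δ)
    {z : Phase n} (hz : z ∈ Metric.cthickening s K) :
    closedBall z δ ⊆ Metric.cthickening (s + δ) K := by
  refine (closedBall_subset_cthickening hz δ).trans ?_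
  refine (Metric.cthickening_cthickening_subset hδ hs K).trans ?_
  rw [add_comm]

lemma iter_bound {U : Set (Phase n)} (hU : IsOpen U) {K : Set (Phase n)} {r : ℝ}
    (hKU : Metric.cthickening r K ⊆ U) {v : Phase n} (hv : ‖v‖ ≤ 1) (m : ℕ) :
    ∀ (g : Phase n → ℂ), DifferentiableOn ℂ g U → ∀ (A δ s : ℝ), 0 ≤ A → 0 < δ → 0 ≤ s →
      s + m * δ ≤ r → (∀ x ∈ Metric.cthickening (s + m * δ) K, ‖g x‖ ≤ A) →
      ∀ z ∈ Metric.cthickening s K, ‖(pdv v)^[m] g z‖ ≤ A / δ ^ m := by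
  induction m with
  | zero =>
    intro g hg A δ s hA hδ hs hsum hbound z hz
    simp only [Function.iterate_zero, id_eq, pow_zero, div_one]
    refine hbound z ?_
    have : s + (0:ℕ) * δ = s := by push_cast; ring
    rwa [this]
  | succ m ih =>
    intro g hg A δ s hA hδ hs hsum hbound z hz
    rw [Function.iterate_succ_apply']
    have hsum' : (s + δ) + m * δ ≤ r := by push_cast at hsum ⊢; linarith
    have hbound' : ∀ x ∈ Metric.cthickening ((s + δ) + m * δ) K, ‖g x‖ ≤ A := by
      have heq : (s + δ) + (m:ℝ) * δ = s + ((m+1 : ℕ):ℝ) * δ := by push_cast; ring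
      rw [heq]; exact hbound
    have hIH := ih g hg A δ (s + δ) hA hδ (by linarith) hsum' hbound'
    have hdiffit : DifferentiableOn ℂ ((pdv v)^[m] g) U := pdv_iterate_differentiableOn hU hv m hg
    have hsub : closedBall z δ ⊆ Metric.cthickening (s + δ) K := cthick_step hs hδ.le hz
    have hsubU : Metric.cthickening (s + δ) K ⊆ U := by
      refine (Metric.cthickening_mono ?_ K).trans hKU
      have h0 : (0:ℝ) ≤ (m:ℝ) * δ := by positivity
      push_cast at hsum; linarith
    have hkey := cauchy_dir hv hδ
      (fun w hw => hdiffit.differentiableAt (hU.mem_nhds (hsubU (hsub hw))))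
      (fun w hw => hIH w (hsub hw))
    calc ‖pdv v ((pdv v)^[m] g) z‖ ≤ (A / δ ^ m) / δ := hkey
      _ = A / δ ^ (m + 1) := by rw [div_div, pow_succ]

/-- foldr of iterated directional derivatives: holomorphy. -/
lemma foldr_differentiableOn {U : Set (Phase n)} (hU : IsOpen U)
    (w : Fin n → Phase n) (hw : ∀ i, ‖w i‖ ≤ 1) (α : Fin n → ℕ) :
    ∀ (l : List (Fin n)) (g : Phase n → ℂ), DifferentiableOn ℂ g U →
      DifferentiableOn ℂ ((l.foldr (fun i F => (pdv (w i))^[α i] ∘ F) id) g) U := by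
  intro l
  induction l with
  | nil => intro g hg; simpa using hg
  | cons i l ih =>
    intro g hg
    exact pdv_iterate_differentiableOn hU (hw i) (α i) (ih g hg)

/-- foldr of iterated directional derivatives: bound. -/
lemma foldr_bound {U : Set (Phase n)} (hU : IsOpen U) {K : Set (Phase n)} {r : ℝ}
    (hKU : Metric.cthickening r K ⊆ U)
    (w : Fin n → Phase n) (hw : ∀ i, ‖w i‖ ≤ 1) (α : Fin n → ℕ) :
    ∀ (l : List (Fin n)) (g : Phase n → ℂ), DifferentiableOn ℂ g U →
      ∀ (A δ s : ℝ), 0 ≤ A → 0 < δ → 0 ≤ s → s + (l.map α).sum * δ ≤ r →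
      (∀ x ∈ Metric.cthickening (s + (l.map α).sum * δ) K, ‖g x‖ ≤ A) →
      ∀ z ∈ Metric.cthickening s K,
        ‖(l.foldr (fun i F => (pdv (w i))^[α i] ∘ F) id) g z‖ ≤ A / δ ^ (l.map α).sum := by
  intro l
  induction l with
  | nil =>
    intro g hg A δ s hA hδ hs hsum hbound z hz
    simp only [List.foldr_nil, id_eq, List.map_nil, List.sum_nil, pow_zero, div_one]
    refine hbound z ?_
    have : s + ((List.map α []).sum : ℝ) * δ = s := by simp
    rwa [this]
  | cons i l ih =>
    intro g hg A δ s hA hδ hs hsum hbound z hz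
    simp only [List.map_cons, List.sum_cons] at hsum ⊢
    have hcast : ((α i + (l.map α).sum : ℕ) : ℝ) = (α i : ℝ) + ((l.map α).sum : ℝ) := by
      push_cast; ring
    have hsum1 : (s + (α i) * δ) + (l.map α).sum * δ ≤ r := by
      rw [hcast] at hsum; nlinarith
    have hbound1 : ∀ x ∈ Metric.cthickening ((s + (α i) * δ) + ((l.map α).sum : ℝ) * δ) K,
        ‖g x‖ ≤ A := by
      have heq : (s + (α i : ℝ) * δ) + ((l.map α).sum : ℝ) * δ
          = s + ((α i + (l.map α).sum : ℕ) : ℝ) * δ := by push_cast; ring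
      rw [heq]; exact hbound
    have hIH := ih g hg A δ (s + (α i) * δ) hA hδ (by positivity) hsum1 hbound1
    have hinner : DifferentiableOn ℂ ((l.foldr (fun i F => (pdv (w i))^[α i] ∘ F) id) g) U :=
      foldr_differentiableOn hU w hw α l g hg
    have hsumi : s + (α i) * δ ≤ r := by
      have h0 : (0:ℝ) ≤ ((l.map α).sum : ℝ) * δ := by positivity
      rw [hcast] at hsum; nlinarith
    have hstep := iter_bound hU hKU (hw i) (α i)
      ((l.foldr (fun i F => (pdv (w i))^[α i] ∘ F) id) g) hinner
      (A / δ ^ (l.map α).sum) δ s (by positivity) hδ hs hsumi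
      (fun x hx => hIH x hx) z hz
    calc ‖(pdv (w i))^[α i] ((l.foldr (fun i F => (pdv (w i))^[α i] ∘ F) id) g) z‖
        ≤ (A / δ ^ (l.map α).sum) / δ ^ (α i) := hstep
      _ = A / δ ^ (α i + (l.map α).sum) := by rw [div_div, pow_add, mul_comm]


lemma pdv_zero (v : Phase n) : pdv v (fun _ => (0:ℂ)) = fun _ => 0 := by
  funext z; simp [pdv]

lemma iterate_pdv_zero (v : Phase n) (m : ℕ) : (pdv v)^[m] (fun _ => (0:ℂ)) = fun _ => 0 := by
  induction m with
  | zero => rfl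
  | succ m ih => rw [Function.iterate_succ_apply', ih, pdv_zero]

lemma foldr_zero (w : Fin n → Phase n) (α : Fin n → ℕ) (l : List (Fin n)) :
    (l.foldr (fun i F => (pdv (w i))^[α i] ∘ F) id) (fun _ => (0:ℂ)) = fun _ => 0 := by
  induction l with
  | nil => rfl
  | cons i l ih =>
    show (pdv (w i))^[α i] ((l.foldr (fun i F => (pdv (w i))^[α i] ∘ F) id) (fun _ => (0:ℂ)))
      = fun _ => 0
    rw [ih, iterate_pdv_zero]

lemma dgen_bound {U : Set (Phase n)} (hU : IsOpen U) {K : Set (Phase n)} {r : ℝ} (hr : 0 < r)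
    (hKU : Metric.cthickening r K ⊆ U) (w : Fin n → Phase n) (hw : ∀ i, ‖w i‖ ≤ 1)
    (α : Fin n → ℕ) {g : Phase n → ℂ} (hg : DifferentiableOn ℂ g U) {A : ℝ} (hA0 : 0 ≤ A)
    (hA : ∀ x ∈ Metric.cthickening r K, ‖g x‖ ≤ A) :
    ∀ z ∈ K, ‖((List.finRange n).foldr (fun i F => (pdv (w i))^[α i] ∘ F) id) g z‖
      ≤ (((∑ i, α i).factorial : ℕ) : ℝ) * (Real.exp 1 / r) ^ (∑ i, α i) * A := by
  intro z hz
  set a : ℕ := ∑ i, α i with ha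
  have hl : ((List.finRange n).map α).sum = a := by rw [ha, Fin.sum_univ_def]
  have hM : (0:ℝ) < ((max 1 a : ℕ) : ℝ) := by
    exact_mod_cast Nat.lt_of_lt_of_le Nat.zero_lt_one (Nat.le_max_left 1 a)
  have haM : (a:ℝ) ≤ ((max 1 a : ℕ) : ℝ) := by exact_mod_cast Nat.le_max_right 1 a
  set δ : ℝ := r / ((max 1 a : ℕ) : ℝ) with hδdef
  have hδ : 0 < δ := div_pos hr hM
  have hsum : (0:ℝ) + (((List.finRange n).map α).sum : ℝ) * δ ≤ r := by
    rw [hl, zero_add, hδdef, mul_div_assoc', div_le_iff₀ hM]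
    nlinarith
  have hbd : ∀ x ∈ Metric.cthickening ((0:ℝ) + (((List.finRange n).map α).sum : ℝ) * δ) K,
      ‖g x‖ ≤ A := fun x hx => hA x (Metric.cthickening_mono hsum K hx)
  have hb := foldr_bound hU hKU w hw α (List.finRange n) g hg A δ 0 hA0 hδ le_rfl
    (by rw [hl] at hsum ⊢; exact hsum) (by rw [hl] at hbd ⊢; exact hbd) z
    (by rw [Metric.cthickening_zero]; exact subset_closure hz)
  rw [hl] at hb
  have hfin : A / δ ^ a = A * ((max 1 a : ℕ) : ℝ) ^ a / r ^ a := by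
    rw [hδdef, div_pow, div_div_eq_mul_div]
  calc ‖((List.finRange n).foldr (fun i F => (pdv (w i))^[α i] ∘ F) id) g z‖
      ≤ A / δ ^ a := hb
    _ = A * ((max 1 a : ℕ) : ℝ) ^ a / r ^ a := hfin
    _ ≤ A * ((a.factorial : ℝ) * Real.exp 1 ^ a) / r ^ a := by
        gcongr
        exact pow_self_le_factorial_mul_exp a
    _ = ((a.factorial : ℕ) : ℝ) * (Real.exp 1 / r) ^ a * A := by
        rw [div_pow]; ring

lemma exists_uniform_bound {U : Set (Phase n)} {K' : Set (Phase n)} (hK' : IsCompact K')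
    (hK'U : K' ⊆ U) {p : ℤ → Phase n → ℂ} (hph : ∀ j : ℤ, DifferentiableOn ℂ (p j) U)
    (hpe : MicroEstimates U p) (mp : ℤ) :
    ∃ C : ℝ, 1 ≤ C ∧ ∀ k : ℤ, k ≤ mp → ∀ w ∈ K',
      ‖p k w‖ ≤ C ^ ((-k).toNat + 1) * (((-k).toNat).factorial : ℝ) := by
  obtain ⟨C₀, hC₀pos, hC₀⟩ := hpe K' hK'U hK'
  have hfin : ∀ s : Finset ℤ, ∃ B : ℝ, 0 ≤ B ∧ ∀ k ∈ s, ∀ w ∈ K', ‖p k w‖ ≤ B := by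
    intro s
    induction s using Finset.induction with
    | empty => exact ⟨0, le_rfl, by simp⟩
    | @insert k s _ ih =>
      obtain ⟨B, hB0, hB⟩ := ih
      obtain ⟨B₁, hB₁⟩ := hK'.exists_bound_of_continuousOn ((hph k).continuousOn.mono hK'U)
      refine ⟨max B B₁, le_trans hB0 (le_max_left _ _), fun k' hk' w hw => ?_⟩
      rcases Finset.mem_insert.1 hk' with rfl | h
      · exact (hB₁ w hw).trans (le_max_right _ _)
      · exact (hB k' h w hw).trans (le_max_left _ _)
  obtain ⟨B, hB0, hB⟩ := hfin (Finset.Icc 0 mp)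
  refine ⟨max 1 (max C₀ B), le_max_left _ _, fun k hk w hw => ?_⟩
  set C : ℝ := max 1 (max C₀ B) with hCdef
  have hC1 : (1:ℝ) ≤ C := le_max_left _ _
  rcases lt_or_ge k 0 with hneg | hpos
  · calc ‖p k w‖ ≤ C₀ ^ (-k).toNat * (((-k).toNat).factorial : ℝ) := hC₀ k hneg w hw
      _ ≤ C ^ (-k).toNat * (((-k).toNat).factorial : ℝ) := by
          gcongr
          exact le_trans (le_max_left _ _) (le_max_right _ _)
      _ ≤ C ^ ((-k).toNat + 1) * (((-k).toNat).factorial : ℝ) := by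
          gcongr
          omega
  · have h0 : (-k).toNat = 0 := by omega
    rw [h0]
    simp only [pow_one, Nat.factorial_zero, Nat.cast_one, mul_one, zero_add]
    calc ‖p k w‖ ≤ B := hB k (Finset.mem_Icc.2 ⟨hpos, hk⟩) w hw
      _ ≤ C := le_trans (le_max_right C₀ B) (le_max_right 1 _)

lemma key_arith (n : ℕ) (r e Cp Cq : ℝ) (hr : 0 < r) (he : 0 < e) (hCp : 1 ≤ Cp) (hCq : 1 ≤ Cq)
    (α : Fin n → ℕ) (mk ml m P : ℕ)
    (h1 : mk + ml + (∑ i, α i) ≤ m + P) :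
    ((∏ i, (α i).factorial : ℕ) : ℝ)⁻¹
      * ((((∑ i, α i).factorial : ℕ) : ℝ) * (e/r)^(∑ i, α i) * (Cp^(mk+1) * (mk.factorial : ℝ)))
      * ((((∑ i, α i).factorial : ℕ) : ℝ) * (e/r)^(∑ i, α i) * (Cq^(ml+1) * (ml.factorial : ℝ)))
    ≤ ((m.factorial : ℕ) : ℝ) * (max 1 ((2:ℝ)^n * (e/r)^2))^(m+P)
        * (max Cp Cq)^(m+P+2) * 2^(m+P) * ((P.factorial : ℕ) : ℝ) := by
  set a : ℕ := ∑ i, α i with ha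
  set q : ℝ := e / r with hq
  set E : ℝ := max 1 ((2:ℝ)^n * q^2) with hE
  set C1 : ℝ := max Cp Cq with hC1
  have hq0 : 0 < q := div_pos he hr
  have hE1 : (1:ℝ) ≤ E := le_max_left _ _
  have hC11 : (1:ℝ) ≤ C1 := le_trans hCp (le_max_left _ _)
  have hprodpos : (0:ℝ) < ((∏ i, (α i).factorial : ℕ) : ℝ) := by
    have : 0 < ∏ i, (α i).factorial := Finset.prod_pos fun i _ => Nat.factorial_pos _
    exact_mod_cast this
  have ham : a ≤ m + P := le_trans (Nat.le_add_left a (mk + ml)) h1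
  -- (i) multinomial bound
  have hmult : ((a.factorial : ℕ) : ℝ) ≤ 2^(n*a) * ((∏ i, (α i).factorial : ℕ) : ℝ) := by
    have h := multinom_le α Finset.univ
    rw [Finset.card_univ, Fintype.card_fin] at h
    exact_mod_cast h
  have hi : ((∏ i, (α i).factorial : ℕ) : ℝ)⁻¹ * ((a.factorial : ℕ) : ℝ) ≤ 2^(n*a) := by
    rw [inv_mul_le_iff₀ hprodpos]
    calc ((a.factorial : ℕ) : ℝ) ≤ 2^(n*a) * ((∏ i, (α i).factorial : ℕ) : ℝ) := hmult
      _ = ((∏ i, (α i).factorial : ℕ) : ℝ) * 2^(n*a) := by ring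
  -- (ii)
  have hii : Cp^(mk+1) * Cq^(ml+1) ≤ C1^(m+P+2) := by
    calc Cp^(mk+1) * Cq^(ml+1) ≤ C1^(mk+1) * C1^(ml+1) := by
          have e1 : Cp^(mk+1) ≤ C1^(mk+1) :=
            pow_le_pow_left₀ (by positivity) (le_max_left _ _) _
          have e2 : Cq^(ml+1) ≤ C1^(ml+1) :=
            pow_le_pow_left₀ (by positivity) (le_max_right _ _) _
          exact mul_le_mul e1 e2 (by positivity) (by positivity)
      _ = C1^(mk+ml+2) := by rw [← pow_add]; ring_nf
      _ ≤ C1^(m+P+2) := pow_le_pow_right₀ hC11 (by omega)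
  -- (iii)+(iv)+(v)
  have hiii : ((a.factorial : ℕ) : ℝ) * ((mk.factorial : ℕ) : ℝ) * ((ml.factorial : ℕ) : ℝ)
      ≤ 2^(m+P) * ((m.factorial : ℕ) : ℝ) * ((P.factorial : ℕ) : ℝ) := by
    have h3 : a.factorial * (mk.factorial * ml.factorial) ≤ 2^(m+P) * (m.factorial * P.factorial) := by
      calc a.factorial * (mk.factorial * ml.factorial)
          ≤ a.factorial * (mk + ml).factorial := by
            exact Nat.mul_le_mul_left _ (fact_mul_fact_le mk ml)
        _ ≤ (a + (mk + ml)).factorial := fact_mul_fact_le a (mk + ml)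
        _ ≤ (m + P).factorial := Nat.factorial_le (by omega)
        _ ≤ 2^(m+P) * (m.factorial * P.factorial) := by
            have := fact_add_le m P
            exact this
    calc ((a.factorial : ℕ) : ℝ) * ((mk.factorial : ℕ) : ℝ) * ((ml.factorial : ℕ) : ℝ)
        = ((a.factorial * (mk.factorial * ml.factorial) : ℕ) : ℝ) := by push_cast; ring
      _ ≤ ((2^(m+P) * (m.factorial * P.factorial) : ℕ) : ℝ) := by exact_mod_cast h3
      _ = 2^(m+P) * ((m.factorial : ℕ) : ℝ) * ((P.factorial : ℕ) : ℝ) := by push_cast; ring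
  -- (vi)
  have hvi : (2:ℝ)^(n*a) * (q^2)^a ≤ E^(m+P) := by
    calc (2:ℝ)^(n*a) * (q^2)^a = ((2:ℝ)^n * q^2)^a := by
          rw [pow_mul, ← mul_pow]
      _ ≤ E^a := by
          gcongr
          exact le_max_right _ _
      _ ≤ E^(m+P) := pow_le_pow_right₀ hE1 ham
  -- combine
  have hqa : q^a * q^a = (q^2)^a := by rw [← pow_add, ← pow_mul, two_mul]
  have hXp : (0:ℝ) ≤ Cp^(mk+1) * (mk.factorial : ℝ) := by positivity
  have hXq : (0:ℝ) ≤ Cq^(ml+1) * (ml.factorial : ℝ) := by positivity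
  calc ((∏ i, (α i).factorial : ℕ) : ℝ)⁻¹
      * (((a.factorial : ℕ) : ℝ) * q^a * (Cp^(mk+1) * (mk.factorial : ℝ)))
      * (((a.factorial : ℕ) : ℝ) * q^a * (Cq^(ml+1) * (ml.factorial : ℝ)))
      = (((∏ i, (α i).factorial : ℕ) : ℝ)⁻¹ * ((a.factorial : ℕ) : ℝ)) * (q^a * q^a)
        * (((a.factorial : ℕ) : ℝ) * ((Cp^(mk+1) * Cq^(ml+1))
          * ((mk.factorial : ℝ) * (ml.factorial : ℝ)))) := by ring
    _ ≤ (2:ℝ)^(n*a) * (q^a * q^a)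
        * (((a.factorial : ℕ) : ℝ) * ((Cp^(mk+1) * Cq^(ml+1))
          * ((mk.factorial : ℝ) * (ml.factorial : ℝ)))) := by
        gcongr
    _ = ((2:ℝ)^(n*a) * (q^2)^a)
        * ((Cp^(mk+1) * Cq^(ml+1))
          * (((a.factorial : ℕ) : ℝ) * (mk.factorial : ℝ) * (ml.factorial : ℝ))) := by
        rw [← hqa]; ring
    _ ≤ E^(m+P) * (C1^(m+P+2)
          * (2^(m+P) * ((m.factorial : ℕ) : ℝ) * ((P.factorial : ℕ) : ℝ))) := by
        have hE0 : (0:ℝ) ≤ E := le_trans zero_le_one hE1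
        refine mul_le_mul hvi (mul_le_mul hii hiii (by positivity) (by positivity))
          (by positivity) (pow_nonneg hE0 _)
    _ = ((m.factorial : ℕ) : ℝ) * E^(m+P) * C1^(m+P+2) * 2^(m+P) * ((P.factorial : ℕ) : ℝ) := by
        ring

lemma one_le_mul' {x y : ℝ} (hx : 1 ≤ x) (hy : 1 ≤ y) : 1 ≤ x * y := by nlinarith

lemma dU_zero (α : Fin n → ℕ) : dU α (0 : Phase n → ℂ) = fun _ => 0 :=
  foldr_zero (fun i => ((0 : Fin n → ℂ), Pi.single i 1)) α (List.finRange n)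

lemma dX_zero (α : Fin n → ℕ) : dX α (0 : Phase n → ℂ) = fun _ => 0 :=
  foldr_zero (fun i => (Pi.single i 1, (0 : Fin n → ℂ))) α (List.finRange n)

lemma dU_est {U : Set (Phase n)} (hU : IsOpen U) {K : Set (Phase n)} {r : ℝ} (hr : 0 < r)
    (hKU : Metric.cthickening r K ⊆ U) (α : Fin n → ℕ) {g : Phase n → ℂ}
    (hg : DifferentiableOn ℂ g U) {A : ℝ} (hA0 : 0 ≤ A)
    (hA : ∀ x ∈ Metric.cthickening r K, ‖g x‖ ≤ A) :
    ∀ z ∈ K, ‖dU α g z‖ ≤ (((∑ i, α i).factorial : ℕ) : ℝ) * (Real.exp 1 / r) ^ (∑ i, α i) * A :=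
  dgen_bound hU hr hKU (fun i => ((0 : Fin n → ℂ), Pi.single i 1)) (fun i => norm_udir i)
    α hg hA0 hA

lemma dX_est {U : Set (Phase n)} (hU : IsOpen U) {K : Set (Phase n)} {r : ℝ} (hr : 0 < r)
    (hKU : Metric.cthickening r K ⊆ U) (α : Fin n → ℕ) {g : Phase n → ℂ}
    (hg : DifferentiableOn ℂ g U) {A : ℝ} (hA0 : 0 ≤ A)
    (hA : ∀ x ∈ Metric.cthickening r K, ‖g x‖ ≤ A) :
    ∀ z ∈ K, ‖dX α g z‖ ≤ (((∑ i, α i).factorial : ℕ) : ℝ) * (Real.exp 1 / r) ^ (∑ i, α i) * A :=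
  dgen_bound hU hr hKU (fun i => (Pi.single i 1, (0 : Fin n → ℂ))) (fun i => norm_xdir i)
    α hg hA0 hA

end WKB

/-- if the formal WKB symbols `p` and `q` on `U` satisfy the
microdifferential estimates, so does their Leibniz product `p★q`
(closure of `𝒲_X` under composition, Section 7 of the paper). -/
theorem stmt_15 (n : ℕ) (hn : 1 ≤ n) (U : Set (Phase n)) (hU : IsOpen U)
    (p q : ℤ → Phase n → ℂ)
    (hpholo : ∀ j : ℤ, DifferentiableOn ℂ (p j) U)
    (hqholo : ∀ j : ℤ, DifferentiableOn ℂ (q j) U)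
    (mp mq : ℤ)
    (hpbound : ∀ j : ℤ, mp < j → p j = 0)
    (hqbound : ∀ j : ℤ, mq < j → q j = 0)
    (hpest : MicroEstimates U p)
    (hqest : MicroEstimates U q) :
    MicroEstimates U (leibniz p q) := by
  intro K hKU hK
  obtain ⟨r, hr, hrU⟩ := hK.exists_cthickening_subset_open hU hKU
  have hK'c : IsCompact (Metric.cthickening r K) := hK.cthickening
  obtain ⟨Cp, hCp1, hCp⟩ := WKB.exists_uniform_bound hK'c hrU hpholo hpest mp
  obtain ⟨Cq, hCq1, hCq⟩ := WKB.exists_uniform_bound hK'c hrU hqholo hqest mq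
  have he : (0:ℝ) < Real.exp 1 := Real.exp_pos 1
  set C1 : ℝ := max Cp Cq with hC1def
  have hC11 : (1:ℝ) ≤ C1 := le_trans hCp1 (le_max_left _ _)
  set P : ℕ := mp.toNat + mq.toNat with hPdef
  set E : ℝ := max 1 ((2:ℝ)^n * (Real.exp 1 / r)^2) with hEdef
  have hE1 : (1:ℝ) ≤ E := le_max_left _ _
  have hE0 : (0:ℝ) ≤ E := le_trans zero_le_one hE1
  have h2n1 : (1:ℝ) ≤ 2^(n+1) := one_le_pow₀ (by norm_num)
  set G : ℝ := E * C1 * 2 * 2^(n+1) with hGdef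
  have hG1 : (1:ℝ) ≤ G := by
    have h1 : (1:ℝ) ≤ E * C1 := WKB.one_le_mul' hE1 hC11
    have h2 : (1:ℝ) ≤ E * C1 * 2 := WKB.one_le_mul' h1 (by norm_num)
    exact WKB.one_le_mul' h2 h2n1
  have hP21 : (1:ℝ) ≤ (((P+2:ℕ)) : ℝ)^(n+1) := one_le_pow₀ (by exact_mod_cast Nat.le_add_left 1 (P+1))
  set G0 : ℝ := E^P * C1^(P+2) * 2^P * ((P.factorial : ℕ) : ℝ) * (((P+2:ℕ)) : ℝ)^(n+1) with hG0def
  have hG01 : (1:ℝ) ≤ G0 := by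
    have f1 : (1:ℝ) ≤ E^P := one_le_pow₀ hE1
    have f2 : (1:ℝ) ≤ C1^(P+2) := one_le_pow₀ hC11
    have f3 : (1:ℝ) ≤ (2:ℝ)^P := one_le_pow₀ (by norm_num)
    have f4 : (1:ℝ) ≤ ((P.factorial : ℕ) : ℝ) := by
      exact_mod_cast Nat.one_le_iff_ne_zero.2 (Nat.factorial_pos P).ne'
    exact WKB.one_le_mul' (WKB.one_le_mul' (WKB.one_le_mul' (WKB.one_le_mul' f1 f2) f3) f4) hP21
  refine ⟨G * G0, lt_of_lt_of_le one_pos (WKB.one_le_mul' hG1 hG01), ?_⟩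
  intro j hj z hz
  set m : ℕ := (-j).toNat with hmdef
  have hm1 : 1 ≤ m := by omega
  set N : ℕ := (mp + mq - j).toNat with hNdef
  set B : Finset ((Fin n → ℕ) × ℤ) :=
    (Fintype.piFinset fun _ : Fin n => Finset.range (N+1)) ×ˢ Finset.Icc (j - mq) mp with hBdef
  have hrw : leibniz p q j z = ∑ᶠ ak : (Fin n → ℕ) × ℤ,
      ((∏ i, (ak.1 i).factorial : ℕ) : ℂ)⁻¹ * dU ak.1 (p ak.2) z
        * dX ak.1 (q (j + ((∑ i, ak.1 i : ℕ) : ℤ) - ak.2)) z := rfl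
  have hsupp : Function.support (fun ak : (Fin n → ℕ) × ℤ =>
      ((∏ i, (ak.1 i).factorial : ℕ) : ℂ)⁻¹ * dU ak.1 (p ak.2) z
        * dX ak.1 (q (j + ((∑ i, ak.1 i : ℕ) : ℤ) - ak.2)) z) ⊆ ↑B := by
    intro ak hak
    simp only [Function.mem_support] at hak
    obtain ⟨α, k⟩ := ak
    have hk : k ≤ mp := by
      by_contra h
      push_neg at h
      apply hak
      show ((∏ i, (α i).factorial : ℕ) : ℂ)⁻¹ * dU α (p k) z * _ = 0
      rw [hpbound k h, WKB.dU_zero]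
      simp
    have hl : j + ((∑ i, α i : ℕ) : ℤ) - k ≤ mq := by
      by_contra h
      push_neg at h
      apply hak
      show ((∏ i, (α i).factorial : ℕ) : ℂ)⁻¹ * _ * dX α (q (j + ((∑ i, α i : ℕ) : ℤ) - k)) z = 0
      rw [hqbound _ h, WKB.dX_zero]
      simp
    rw [hBdef, Finset.mem_coe, Finset.mem_product]
    constructor
    · rw [Fintype.mem_piFinset]
      intro i
      rw [Finset.mem_range]
      show α i < N + 1
      have hia : α i ≤ ∑ i', α i' :=
        Finset.single_le_sum (f := fun i => α i) (fun _ _ => Nat.zero_le _) (Finset.mem_univ i)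
      omega
    · rw [Finset.mem_Icc]
      refine ⟨?_, hk⟩
      have h0 : (0:ℤ) ≤ ((∑ i, α i : ℕ) : ℤ) := Int.natCast_nonneg _
      omega
  rw [hrw, finsum_eq_sum_of_support_subset _ hsupp]
  set Tb : ℝ := ((m.factorial : ℕ) : ℝ) * E^(m+P) * C1^(m+P+2) * 2^(m+P) * ((P.factorial : ℕ) : ℝ)
    with hTbdef
  have hTb0 : 0 ≤ Tb := by
    have : (0:ℝ) ≤ E^(m+P) := pow_nonneg hE0 _
    positivity
  have hterm : ∀ ak ∈ B, ‖((∏ i, (ak.1 i).factorial : ℕ) : ℂ)⁻¹ * dU ak.1 (p ak.2) z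
        * dX ak.1 (q (j + ((∑ i, ak.1 i : ℕ) : ℤ) - ak.2)) z‖ ≤ Tb := by
    rintro ⟨α, k⟩ hakB
    rcases le_or_gt k mp with hk | hk
    swap
    · show ‖((∏ i, (α i).factorial : ℕ) : ℂ)⁻¹ * dU α (p k) z * _‖ ≤ Tb
      rw [hpbound k hk, WKB.dU_zero]
      simpa using hTb0
    rcases le_or_gt (j + ((∑ i, α i : ℕ) : ℤ) - k) mq with hl | hl
    swap
    · show ‖((∏ i, (α i).factorial : ℕ) : ℂ)⁻¹ * _ *
        dX α (q (j + ((∑ i, α i : ℕ) : ℤ) - k)) z‖ ≤ Tb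
      rw [hqbound _ hl, WKB.dX_zero]
      simpa using hTb0
    set a : ℕ := ∑ i, α i with hadef
    set mk : ℕ := (-k).toNat with hmkdef
    set ml : ℕ := (-(j + (a:ℤ) - k)).toNat with hmldef
    have hdUb := WKB.dU_est hU hr hrU α (hpholo k)
        (A := Cp^(mk+1) * ((mk.factorial : ℕ) : ℝ)) (by positivity)
        (fun x hx => hCp k hk x hx) z hz
    have hdXb := WKB.dX_est hU hr hrU α (hqholo (j + (a:ℤ) - k))
        (A := Cq^(ml+1) * ((ml.factorial : ℕ) : ℝ)) (by positivity)
        (fun x hx => hCq _ hl x hx) z hz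
    have hnorm : ‖(((∏ i, (α i).factorial : ℕ) : ℂ))⁻¹‖
        = (((∏ i, (α i).factorial : ℕ) : ℝ))⁻¹ := by
      rw [norm_inv, Complex.norm_natCast]
    have harith := WKB.key_arith n r (Real.exp 1) Cp Cq hr he hCp1 hCq1 α mk ml m P (by omega)
    calc ‖((∏ i, (α i).factorial : ℕ) : ℂ)⁻¹ * dU α (p k) z
          * dX α (q (j + (a:ℤ) - k)) z‖
        = ‖(((∏ i, (α i).factorial : ℕ) : ℂ))⁻¹‖ * ‖dU α (p k) z‖
          * ‖dX α (q (j + (a:ℤ) - k)) z‖ := by rw [norm_mul, norm_mul]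
      _ ≤ (((∏ i, (α i).factorial : ℕ) : ℝ))⁻¹
          * (((a.factorial : ℕ) : ℝ) * (Real.exp 1 / r) ^ a * (Cp^(mk+1) * ((mk.factorial : ℕ) : ℝ)))
          * (((a.factorial : ℕ) : ℝ) * (Real.exp 1 / r) ^ a * (Cq^(ml+1) * ((ml.factorial : ℕ) : ℝ))) := by
          rw [hnorm]
          gcongr
      _ ≤ Tb := harith
  have hNP : N + 1 ≤ (P+2) * 2^m := by
    have h1 : N + 1 ≤ m + (P + 1) := by omega
    have h2 : m + (P+1) ≤ (P+1) * 2^m := WKB.madd_le m (P+1) (by omega)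
    have h3 : (P+1) * 2^m ≤ (P+2) * 2^m := Nat.mul_le_mul_right _ (by omega)
    omega
  have hcard : B.card ≤ (N+1)^(n+1) := by
    rw [hBdef, Finset.card_product, Fintype.card_piFinset]
    simp only [Finset.card_range, Finset.prod_const, Finset.card_univ, Fintype.card_fin]
    have hIcc : (Finset.Icc (j - mq) mp).card ≤ N + 1 := by
      rw [Int.card_Icc]
      omega
    calc (N+1)^n * (Finset.Icc (j - mq) mp).card ≤ (N+1)^n * (N+1) :=
        Nat.mul_le_mul_left _ hIcc
      _ = (N+1)^(n+1) := by rw [pow_succ]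
  have hsplit : ((((P+2) * 2^m : ℕ)) : ℝ)^(n+1) * Tb
      = ((m.factorial : ℕ) : ℝ) * G^m * G0 := by
    rw [hTbdef, hGdef, hG0def]
    push_cast
    rw [mul_pow, ← pow_mul (2:ℝ) m (n+1)]
    rw [pow_add E m P, show m + P + 2 = m + (P + 2) from by omega, pow_add C1 m (P+2),
      pow_add (2:ℝ) m P]
    ring_nf
    rw [show (4:ℝ)^m = 2^(m*2) from by rw [mul_comm m 2, pow_mul]; norm_num]
    ring
  calc ‖∑ ak ∈ B, ((∏ i, (ak.1 i).factorial : ℕ) : ℂ)⁻¹ * dU ak.1 (p ak.2) z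
        * dX ak.1 (q (j + ((∑ i, ak.1 i : ℕ) : ℤ) - ak.2)) z‖
      ≤ ∑ ak ∈ B, ‖((∏ i, (ak.1 i).factorial : ℕ) : ℂ)⁻¹ * dU ak.1 (p ak.2) z
        * dX ak.1 (q (j + ((∑ i, ak.1 i : ℕ) : ℤ) - ak.2)) z‖ := norm_sum_le _ _
    _ ≤ B.card • Tb := Finset.sum_le_card_nsmul _ _ _ hterm
    _ = (B.card : ℝ) * Tb := nsmul_eq_mul _ _
    _ ≤ ((((P+2) * 2^m : ℕ)) : ℝ)^(n+1) * Tb := by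
        have hc2 : B.card ≤ ((P+2) * 2^m)^(n+1) :=
          le_trans hcard (Nat.pow_le_pow_left hNP _)
        have hc3 : (B.card : ℝ) ≤ ((((P+2) * 2^m : ℕ)) : ℝ)^(n+1) := by
          exact_mod_cast hc2
        exact mul_le_mul_of_nonneg_right hc3 hTb0
    _ = ((m.factorial : ℕ) : ℝ) * G^m * G0 := hsplit
    _ ≤ ((m.factorial : ℕ) : ℝ) * (G*G0)^m := by
        have hstep : G^m * G0 ≤ (G*G0)^m := by
          have h1 : G0 ≤ G0^m := by
            calc G0 = G0^1 := (pow_one _).symm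
              _ ≤ G0^m := pow_le_pow_right₀ hG01 hm1
          calc G^m * G0 ≤ G^m * G0^m :=
              mul_le_mul_of_nonneg_left h1 (pow_nonneg (le_trans zero_le_one hG1) m)
            _ = (G*G0)^m := (mul_pow _ _ _).symm
        calc ((m.factorial : ℕ) : ℝ) * G^m * G0
            = ((m.factorial : ℕ) : ℝ) * (G^m * G0) := by ring
          _ ≤ ((m.factorial : ℕ) : ℝ) * (G*G0)^m := by
              have hmf : (0:ℝ) ≤ ((m.factorial : ℕ) : ℝ) := by positivity
              exact mul_le_mul_of_nonneg_left hstep hmf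
    _ = (G*G0)^(-j).toNat * (((-j).toNat).factorial : ℝ) := by rw [hmdef]; ring
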